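/- arXiv:2403.03055 — 5 statements merged into one kernel-verified Lean document; each statement's English description precedes it below -/
import Mathlib

section
/- Let A be a normed ring, n a positive integer, d : Fin n → Fin n → ℕ a graph distance satisfying the triangle inequality, and γ ∈ (0,1). If X, Y : Matrix (Fin n) (Fin n) A are (x,γ)-SED and (y,γ)-SED respectively with respect to d (with x, y > 0), then the product X * Y is (n·x·y, γ)-SED with respect to d, i.e. ‖(X * Y) i j‖ ≤ n·x·y·γ^(d i j) for all i, j. -/
/-- If `X` is `(x,γ)`-SED and `Y` is `(y,γ)`-SED with respect to a graph
distance `d` satisfying the triangle inequality, then `X * Y` is `(n·x·y,γ)`-SED. -/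
theorem sed_mul_sed {A : Type*} [NormedRing A] {n : ℕ} (hn : 0 < n)
    (d : Fin n → Fin n → ℕ)
    (hd_refl : ∀ i, d i i = 0)
    (hd_symm : ∀ i j, d i j = d j i)
    (hd_tri : ∀ i j k, d i k ≤ d i j + d j k)
    {γ : ℝ} (hγ0 : 0 < γ) (hγ1 : γ < 1)
    {x y : ℝ} (hx : 0 < x) (hy : 0 < y)
    (X Y : Matrix (Fin n) (Fin n) A)
    (hX : ∀ i j, ‖X i j‖ ≤ x * γ ^ (d i j))
    (hY : ∀ i j, ‖Y i j‖ ≤ y * γ ^ (d i j)) :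
    ∀ i j, ‖(X * Y) i j‖ ≤ (n : ℝ) * x * y * γ ^ (d i j) := by
  intro i j
  have hmul : (X * Y) i j = ∑ k, X i k * Y k j := rfl
  rw [hmul]
  calc ‖∑ k, X i k * Y k j‖ ≤ ∑ k : Fin n, x * y * γ ^ (d i j) := by
        refine (norm_sum_le _ _).trans (Finset.sum_le_sum fun k _ => ?_)
        have h1 : ‖X i k * Y k j‖ ≤ (x * γ ^ (d i k)) * (y * γ ^ (d k j)) :=
          (norm_mul_le _ _).trans (mul_le_mul (hX i k) (hY k j) (norm_nonneg _)
            (by positivity))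
        refine h1.trans ?_
        have : γ ^ (d i k) * γ ^ (d k j) ≤ γ ^ (d i j) := by
          rw [← pow_add]
          exact pow_le_pow_of_le_one hγ0.le hγ1.le (hd_tri i k j)
        calc x * γ ^ (d i k) * (y * γ ^ (d k j))
            = x * y * (γ ^ (d i k) * γ ^ (d k j)) := by ring
          _ ≤ x * y * γ ^ (d i j) := by
              exact mul_le_mul_of_nonneg_left this (by positivity)
    _ = (n : ℝ) * x * y * γ ^ (d i j) := by
        rw [Finset.sum_const, Finset.card_univ, Fintype.card_fin, nsmul_eq_mul]; ring
end

section
/- Let A be a normed ring, n a positive integer, d : Fin n → Fin n → ℕ a graph distance satisfying the triangle inequality, γ ∈ (0,1), and κ : ℕ. Suppose X : Matrix (Fin n) (Fin n) A is (x,γ)-SED with respect to d (x > 0), and Y : Matrix (Fin n) (Fin n) A is κ-banded with respect to d with ‖Y i j‖ ≤ ȳ for all i, j. Then for all i, j, ‖(X * Y) i j‖ ≤ n·x·ȳ·γ^(d i j) / γ^κ; that is, X * Y is (n·x·ȳ·γ^(−κ), γ)-SED with respect to d. -/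
/-- If `X` is `(x,γ)`-SED and `Y` is `κ`-banded with entry norms bounded by
`ȳ`, then `X * Y` is `(n·x·ȳ·γ^(−κ), γ)`-SED with respect to `d`. -/
theorem sed_mul_banded {A : Type*} [NormedRing A] {n : ℕ} (hn : 0 < n)
    (d : Fin n → Fin n → ℕ)
    (hd_refl : ∀ i, d i i = 0)
    (hd_symm : ∀ i j, d i j = d j i)
    (hd_tri : ∀ i j k, d i k ≤ d i j + d j k)
    {γ : ℝ} (hγ0 : 0 < γ) (hγ1 : γ < 1) (κ : ℕ)
    {x ybar : ℝ} (hx : 0 < x)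
    (X Y : Matrix (Fin n) (Fin n) A)
    (hX : ∀ i j, ‖X i j‖ ≤ x * γ ^ (d i j))
    (hY_band : ∀ i j, κ < d i j → Y i j = 0)
    (hY_bound : ∀ i j, ‖Y i j‖ ≤ ybar) :
    ∀ i j, ‖(X * Y) i j‖ ≤ (n : ℝ) * x * ybar * γ ^ (d i j) / γ ^ κ := by
  intro i j
  have hy0 : (0:ℝ) ≤ ybar := le_trans (norm_nonneg _) (hY_bound ⟨0, hn⟩ ⟨0, hn⟩)
  have key : ∀ k, ‖X i k‖ * ‖Y k j‖ ≤ x * ybar * γ ^ (d i j) / γ ^ κ := by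
    intro k
    by_cases h : κ < d k j
    · rw [hY_band k j h, norm_zero, mul_zero]
      positivity
    · push_neg at h
      have hdk : d i j ≤ d i k + κ := le_trans (hd_tri i k j) (by omega)
      have hpow : γ ^ (d i k) ≤ γ ^ (d i j) / γ ^ κ := by
        rw [le_div_iff₀ (by positivity), ← pow_add]
        exact pow_le_pow_of_le_one hγ0.le hγ1.le hdk
      calc ‖X i k‖ * ‖Y k j‖ ≤ (x * γ ^ (d i k)) * ybar :=
            mul_le_mul (hX i k) (hY_bound k j) (norm_nonneg _) (by positivity)
        _ ≤ x * (γ ^ (d i j) / γ ^ κ) * ybar := by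
            gcongr
        _ = x * ybar * γ ^ (d i j) / γ ^ κ := by ring
  rw [Matrix.mul_apply]
  calc ‖∑ k, X i k * Y k j‖ ≤ ∑ k, ‖X i k‖ * ‖Y k j‖ := norm_sum_le_of_le _ (fun k _ => norm_mul_le _ _)
    _ ≤ ∑ _k : Fin n, x * ybar * γ ^ (d i j) / γ ^ κ :=
        Finset.sum_le_sum (fun k _ => key k)
    _ = (n : ℝ) * x * ybar * γ ^ (d i j) / γ ^ κ := by
        rw [Finset.sum_const, Finset.card_univ, Fintype.card_fin]
        ring
end

section
/- Let e = exp 1. For all natural numbers t and κ with κ ≤ t and t + κ even, the binomial coefficient satisfies (choose t ((t+κ)/2) : ℝ) ≤ e · ((3e/2)^(3/2))^t · (e^(−1/2))^κ. (This bounds the number of length-t walks between two vertices at distance κ in the path graph ℤ by e · ((3e/2)^(3/2))^t · e^(−κ/2).) -/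
open Real

/-- For `κ ≤ t` with `t + κ` even, the binomial coefficient (i.e. the
number of length-`t` walks between vertices at distance `κ` in the path graph ℤ)
satisfies `choose t ((t+κ)/2) ≤ e · ((3e/2)^(3/2))^t · (e^(−1/2))^κ`. -/
theorem choose_le_line_walk_bound (t κ : ℕ) (hκt : κ ≤ t) (heven : Even (t + κ)) :
    (Nat.choose t ((t + κ) / 2) : ℝ) ≤
      Real.exp 1 * ((3 * Real.exp 1 / 2) ^ ((3 : ℝ) / 2)) ^ t *
        (Real.exp 1 ^ (-(1 : ℝ) / 2)) ^ κ := by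
  set c : ℝ := (3 * Real.exp 1 / 2) ^ ((3 : ℝ) / 2) with hc
  set d : ℝ := Real.exp 1 ^ (-(1 : ℝ) / 2) with hd
  have he1 : (1 : ℝ) ≤ Real.exp 1 := by
    have := Real.add_one_le_exp (1 : ℝ); linarith
  have hd' : d = Real.exp (-(1 : ℝ) / 2) := Real.exp_one_rpow _
  have hd0 : 0 < d := by rw [hd']; exact Real.exp_pos _
  have hd1 : d ≤ 1 := by
    rw [hd', show (1:ℝ) = Real.exp 0 by simp]
    exact Real.exp_le_exp.2 (by norm_num)
  have hc0 : 0 < c := Real.rpow_pos_of_pos (by linarith) _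
  -- key: 2 ≤ c * d
  have hcd : (2 : ℝ) ≤ c * d := by
    have h1 : Real.exp ((3 : ℝ) / 2) ≤ c := by
      rw [hc, ← Real.exp_one_rpow ((3:ℝ)/2)]
      exact Real.rpow_le_rpow (Real.exp_pos 1).le (by linarith) (by norm_num)
    have h2 : Real.exp ((3:ℝ)/2) * d = Real.exp 1 := by
      rw [hd', ← Real.exp_add]; norm_num
    have h3 : (2 : ℝ) ≤ Real.exp 1 := by
      have := Real.add_one_le_exp (1 : ℝ); linarith
    calc (2:ℝ) ≤ Real.exp 1 := h3
      _ = Real.exp ((3:ℝ)/2) * d := h2.symm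
      _ ≤ c * d := by
          exact mul_le_mul_of_nonneg_right h1 hd0.le
  have hchoose : (Nat.choose t ((t + κ) / 2) : ℝ) ≤ (2 : ℝ) ^ t := by
    have hnat : Nat.choose t ((t + κ) / 2) ≤ 2 ^ t := by
      rw [← Nat.sum_range_choose t]
      exact Finset.single_le_sum (f := fun i => Nat.choose t i) (fun i _ => Nat.zero_le _)
        (Finset.mem_range.2 (Nat.lt_succ_of_le (Nat.div_le_of_le_mul (by omega))))
    calc (Nat.choose t ((t + κ) / 2) : ℝ) ≤ ((2 ^ t : ℕ) : ℝ) := by exact_mod_cast hnat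
      _ = (2 : ℝ) ^ t := by push_cast; ring
  calc (Nat.choose t ((t + κ) / 2) : ℝ) ≤ (2 : ℝ) ^ t := hchoose
    _ ≤ (c * d) ^ t := pow_le_pow_left₀ (by norm_num) hcd t
    _ = c ^ t * d ^ t := mul_pow c d t
    _ ≤ c ^ t * d ^ κ := by
        exact mul_le_mul_of_nonneg_left (pow_le_pow_of_le_one hd0.le hd1 hκt)
          (pow_nonneg hc0.le t)
    _ ≤ Real.exp 1 * c ^ t * d ^ κ := by
        have : (1:ℝ) * (c ^ t * d ^ κ) ≤ Real.exp 1 * (c ^ t * d ^ κ) :=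
          mul_le_mul_of_nonneg_right he1 (by positivity)
        linarith [this]
end

section
/- Let e = exp 1. For all t : ℕ and all u, v : ℤ × ℤ, the number of functions s : Fin t → ℤ × ℤ such that every value s i lies in {(1,0), (−1,0), (0,1), (0,−1)} and Σ_i s i = v − u is at most (e/2) · ((5e²)/2)^t · e^(−κ), where κ = |v.1 − u.1| + |v.2 − u.2| is the ℓ¹ (grid-graph) distance between u and v. (This bounds the number of length-t walks from u to v in the 4-regular grid graph on ℤ².) -/
open Real

lemma grid_card_le (t : ℕ) (Q : (Fin t → ℤ × ℤ) → Prop) :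
    Nat.card {s : Fin t → ℤ × ℤ //
        (∀ i, s i ∈ ({(1, 0), (-1, 0), (0, 1), (0, -1)} : Set (ℤ × ℤ))) ∧ Q s} ≤ 4 ^ t := by
  classical
  set T : Finset (ℤ × ℤ) := {(1, 0), (-1, 0), (0, 1), (0, -1)} with hT
  have hinj : Function.Injective
      (fun s : {s : Fin t → ℤ × ℤ //
        (∀ i, s i ∈ ({(1, 0), (-1, 0), (0, 1), (0, -1)} : Set (ℤ × ℤ))) ∧ Q s} =>
        (fun i => (⟨s.1 i, by have := s.2.1 i; simp [hT]; simpa using this⟩ : T) :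
          Fin t → T)) := by
    intro a b hab
    apply Subtype.ext
    funext i
    exact congrArg Subtype.val (congrFun hab i)
  have := Nat.card_le_card_of_injective _ hinj
  refine this.trans ?_
  rw [Nat.card_eq_fintype_card, Fintype.card_fun]
  have : Fintype.card T = 4 := by decide
  simp [this]

/-- The number of length-`t` walks from `u` to `v` in the 4-regular grid
graph on ℤ² (sequences of `t` unit steps summing to `v − u`) is at most
`(e/2) · ((5e²)/2)^t · e^(−κ)`, where `κ = |v.1 − u.1| + |v.2 − u.2|` is the grid-graph
distance between `u` and `v`. -/
theorem grid_walk_count_bound (t : ℕ) (u v : ℤ × ℤ) :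
    (Nat.card {s : Fin t → ℤ × ℤ //
        (∀ i, s i ∈ ({(1, 0), (-1, 0), (0, 1), (0, -1)} : Set (ℤ × ℤ))) ∧
        (∑ i, s i) = v - u} : ℝ) ≤
      (Real.exp 1 / 2) * (5 * Real.exp 1 ^ 2 / 2) ^ t *
        Real.exp 1 ^ (-(((v.1 - u.1).natAbs + (v.2 - u.2).natAbs : ℕ) : ℝ)) := by
  have he : (2.7182818283 : ℝ) < Real.exp 1 := Real.exp_one_gt_d9
  set κ : ℕ := (v.1 - u.1).natAbs + (v.2 - u.2).natAbs with hκ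
  have hrpow : Real.exp 1 ^ (-(κ : ℝ)) = ((Real.exp 1) ^ κ)⁻¹ := by
    rw [Real.rpow_neg (Real.exp_pos 1).le, ← Real.rpow_natCast (Real.exp 1) κ]
  rw [hrpow]
  -- key: any valid s gives κ ≤ t
  have hkey : ∀ s : Fin t → ℤ × ℤ,
      (∀ i, s i ∈ ({(1, 0), (-1, 0), (0, 1), (0, -1)} : Set (ℤ × ℤ))) →
      (∑ i, s i) = v - u → κ ≤ t := by
    intro s hs1 hs2
    have h1 : (∑ i, (s i).1) = v.1 - u.1 := by
      rw [← Prod.fst_sum, hs2, Prod.fst_sub]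
    have h2 : (∑ i, (s i).2) = v.2 - u.2 := by
      rw [← Prod.snd_sum, hs2, Prod.snd_sub]
    have hstep : ∀ i, (s i).1.natAbs + (s i).2.natAbs = 1 := by
      intro i
      rcases hs1 i with h | h | h | h <;> simp_all
    calc κ = (∑ i, (s i).1).natAbs + (∑ i, (s i).2).natAbs := by rw [h1, h2]
      _ ≤ (∑ i, (s i).1.natAbs) + (∑ i, (s i).2.natAbs) :=
          Nat.add_le_add (nat_abs_sum_le _ _) (nat_abs_sum_le _ _)
      _ = ∑ i, ((s i).1.natAbs + (s i).2.natAbs) := (Finset.sum_add_distrib).symm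
      _ = t := by simp [hstep]
  by_cases hle : κ ≤ t
  · have hcard := grid_card_le t (fun s => (∑ i, s i) = v - u)
    have hcardR : (Nat.card {s : Fin t → ℤ × ℤ //
        (∀ i, s i ∈ ({(1, 0), (-1, 0), (0, 1), (0, -1)} : Set (ℤ × ℤ))) ∧
        (∑ i, s i) = v - u} : ℝ) ≤ (4 : ℝ) ^ t := by
      exact_mod_cast hcard
    refine hcardR.trans ?_
    rw [← div_eq_mul_inv, le_div_iff₀ (by positivity)]
    calc (4:ℝ) ^ t * Real.exp 1 ^ κ
        ≤ (4:ℝ) ^ t * Real.exp 1 ^ t := by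
          have h1e : (1:ℝ) ≤ Real.exp 1 := by nlinarith
          exact mul_le_mul_of_nonneg_left (pow_le_pow_right₀ h1e hle) (by positivity)
      _ = (4 * Real.exp 1) ^ t := by rw [mul_pow]
      _ ≤ (5 * Real.exp 1 ^ 2 / 2) ^ t := by
          apply pow_le_pow_left₀ (by positivity)
          nlinarith
      _ ≤ Real.exp 1 / 2 * (5 * Real.exp 1 ^ 2 / 2) ^ t :=
          le_mul_of_one_le_left (by positivity) (by nlinarith)
  · have hempty : IsEmpty {s : Fin t → ℤ × ℤ //
        (∀ i, s i ∈ ({(1, 0), (-1, 0), (0, 1), (0, -1)} : Set (ℤ × ℤ))) ∧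
        (∑ i, s i) = v - u} := ⟨fun s => hle (hkey s.1 s.2.1 s.2.2)⟩
    rw [Nat.card_of_isEmpty]
    norm_num
    positivity
end

section
/- Let e = exp 1 and let f be a positive integer. Consider the infinite f-ary tree T: the simple graph with vertex set List (Fin f), in which x and y are adjacent iff y = a :: x or x = a :: y for some a : Fin f. For all vertices x, y, all t : ℕ, and all κ : ℕ with κ ≤ dist_T(x,y) (the graph distance in T), the number of walks of length t from x to y in T is at most (2e²·f^(1/2))^t · (e^(−1)·f^(−1/2))^κ. -/
open Real

/-- The infinite `f`-ary tree: the simple graph on `List (Fin f)` in which `x` and `y`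
are adjacent iff `y = a :: x` or `x = a :: y` for some `a : Fin f`. -/
def infTree (f : ℕ) : SimpleGraph (List (Fin f)) where
  Adj x y := (∃ a : Fin f, y = a :: x) ∨ (∃ a : Fin f, x = a :: y)
  symm := ⟨fun x y h => h.symm⟩
  loopless := ⟨fun x h => by
    rcases h with ⟨a, ha⟩ | ⟨a, ha⟩ <;> exact List.cons_ne_self a x ha.symm⟩

/-! ### Longest common prefix length -/

section Lcp

variable {α : Type*} [DecidableEq α]

/-- Length of the longest common prefix of two lists. -/
def twcLcp : List α → List α → ℕ
  | a :: xs, b :: ys => if a = b then twcLcp xs ys + 1 else 0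
  | _, _ => 0

@[simp] lemma twcLcp_nil_left (M : List α) : twcLcp [] M = 0 := by cases M <;> rfl

@[simp] lemma twcLcp_nil_right (L : List α) : twcLcp L [] = 0 := by cases L <;> rfl

@[simp] lemma twcLcp_cons_cons (a b : α) (xs ys : List α) :
    twcLcp (a :: xs) (b :: ys) = if a = b then twcLcp xs ys + 1 else 0 := rfl

lemma twcLcp_le_left : ∀ L M : List α, twcLcp L M ≤ L.length
  | [], _ => by simp
  | _ :: _, [] => by simp
  | a :: xs, b :: ys => by
      simp only [twcLcp_cons_cons, List.length_cons]
      split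
      · exact Nat.succ_le_succ (twcLcp_le_left xs ys)
      · omega

lemma twcLcp_le_right : ∀ L M : List α, twcLcp L M ≤ M.length
  | [], _ => by simp
  | _ :: _, [] => by simp
  | a :: xs, b :: ys => by
      simp only [twcLcp_cons_cons, List.length_cons]
      split
      · exact Nat.succ_le_succ (twcLcp_le_right xs ys)
      · omega

lemma twcLcp_self : ∀ L : List α, twcLcp L L = L.length
  | [] => by simp
  | a :: xs => by simp [twcLcp_self xs]

lemma twcLcp_take : ∀ L M : List α, L.take (twcLcp L M) = M.take (twcLcp L M)
  | [], M => by simp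
  | _ :: _, [] => by simp
  | a :: xs, b :: ys => by
      by_cases h : a = b
      · subst h
        simp [twcLcp_take xs ys]
      · simp [h]

lemma twcLcp_append_le : ∀ (L M : List α) (c : α), twcLcp (L ++ [c]) M ≤ twcLcp L M + 1
  | [], M, c => by
      cases M with
      | nil => simp
      | cons b ys => simp only [List.nil_append, twcLcp_cons_cons, twcLcp_nil_left]; split <;> omega
  | a :: xs, [], c => by simp
  | a :: xs, b :: ys, c => by
      simp only [List.cons_append, twcLcp_cons_cons]
      split
      · exact Nat.succ_le_succ (twcLcp_append_le xs ys c)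
      · omega

lemma twcLcp_le_append : ∀ (L M : List α) (c : α), twcLcp L M ≤ twcLcp (L ++ [c]) M
  | [], M, c => by simp
  | a :: xs, [], c => by simp
  | a :: xs, b :: ys, c => by
      simp only [List.cons_append, twcLcp_cons_cons]
      split
      · exact Nat.succ_le_succ (twcLcp_le_append xs ys c)
      · omega

lemma twcLcp_append_unique : ∀ (L M : List α) (a b : α),
    twcLcp L M + 1 ≤ twcLcp (L ++ [a]) M → twcLcp L M + 1 ≤ twcLcp (L ++ [b]) M → a = b
  | [], M, a, b => by
      cases M with
      | nil => simp
      | cons m ms =>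
          intro h1 h2
          simp only [List.nil_append, twcLcp_nil_left, zero_add, twcLcp_cons_cons] at h1 h2
          have ha : a = m := by by_contra hc; simp [hc] at h1
          have hb : b = m := by by_contra hc; simp [hc] at h2
          rw [ha, hb]
  | x :: L', M, a, b => by
      cases M with
      | nil => intro h1 _; simp at h1
      | cons m ms =>
          intro h1 h2
          by_cases hxm : x = m
          · subst hxm
            simp at h1 h2
            exact twcLcp_append_unique L' ms a b (by omega) (by omega)
          · simp only [List.cons_append, twcLcp_cons_cons, if_neg hxm] at h1
            omega

end Lcp

/-! ### The distance function on the tree -/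

/-- Explicit distance function on the `f`-ary tree. -/
def twcRho (f : ℕ) (x y : List (Fin f)) : ℕ :=
  x.length + y.length - 2 * twcLcp x.reverse y.reverse

lemma twcRho_self (f : ℕ) (x : List (Fin f)) : twcRho f x x = 0 := by
  simp only [twcRho, twcLcp_self, List.length_reverse]
  omega

lemma twcRho_cons_ge (f : ℕ) (a : Fin f) (x y : List (Fin f)) :
    twcRho f x y - 1 ≤ twcRho f (a :: x) y := by
  have h1 := twcLcp_append_le x.reverse y.reverse a
  have h2 := twcLcp_le_left x.reverse y.reverse
  have h3 := twcLcp_le_right x.reverse y.reverse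
  simp only [List.length_reverse] at h2 h3
  simp only [twcRho, List.reverse_cons, List.length_cons]
  omega

lemma twcRho_tail_ge (f : ℕ) (x y : List (Fin f)) :
    twcRho f x y - 1 ≤ twcRho f x.tail y := by
  cases x with
  | nil => simp
  | cons c z =>
      have h1 := twcLcp_le_append z.reverse y.reverse c
      have h2 := twcLcp_le_left z.reverse y.reverse
      have h3 := twcLcp_le_right z.reverse y.reverse
      simp only [List.length_reverse] at h2 h3
      simp only [twcRho, List.reverse_cons, List.length_cons, List.tail_cons]
      omega

lemma twcRho_cons_of_le (f : ℕ) (a : Fin f) (x y : List (Fin f))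
    (hle : twcLcp (x.reverse ++ [a]) y.reverse ≤ twcLcp x.reverse y.reverse) :
    twcRho f x y + 1 ≤ twcRho f (a :: x) y := by
  have h2 := twcLcp_le_left x.reverse y.reverse
  have h3 := twcLcp_le_right x.reverse y.reverse
  simp only [List.length_reverse] at h2 h3
  simp only [twcRho, List.reverse_cons, List.length_cons]
  omega

lemma twcRho_cons_exceptional (f : ℕ) (hf : 0 < f) (x y : List (Fin f)) :
    ∃ b : Fin f, ∀ a : Fin f, a ≠ b → twcRho f x y + 1 ≤ twcRho f (a :: x) y := by
  classical
  by_cases h : ∃ b : Fin f,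
      twcLcp x.reverse y.reverse + 1 ≤ twcLcp (x.reverse ++ [b]) y.reverse
  · obtain ⟨b, hb⟩ := h
    refine ⟨b, fun a ha => ?_⟩
    refine twcRho_cons_of_le f a x y ?_
    by_contra hc
    exact ha (twcLcp_append_unique _ _ a b (by omega) hb)
  · push_neg at h
    refine ⟨⟨0, hf⟩, fun a _ => ?_⟩
    exact twcRho_cons_of_le f a x y (by have := h a; omega)

/-! ### Walks, distance, and local finiteness -/

lemma twc_adj_cons (f : ℕ) (a : Fin f) (z : List (Fin f)) :
    (infTree f).Adj (a :: z) z := Or.inr ⟨a, rfl⟩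

lemma twc_walk_suffix (f : ℕ) :
    ∀ x s : List (Fin f), s <:+ x →
      ∃ w : (infTree f).Walk x s, w.length = x.length - s.length := by
  intro x
  induction x with
  | nil =>
      intro s hs
      rcases List.suffix_nil.mp hs with rfl
      exact ⟨SimpleGraph.Walk.nil, by simp⟩
  | cons a x' ih =>
      intro s hs
      rcases List.suffix_cons_iff.mp hs with rfl | hs'
      · exact ⟨SimpleGraph.Walk.nil, by simp⟩
      · obtain ⟨w, hw⟩ := ih s hs'
        have hl := hs'.length_le
        exact ⟨SimpleGraph.Walk.cons (twc_adj_cons f a x') w,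
          by simp only [SimpleGraph.Walk.length_cons, List.length_cons, hw]; omega⟩

lemma twc_dist_le_rho (f : ℕ) (x y : List (Fin f)) :
    (infTree f).dist x y ≤ twcRho f x y := by
  set l := twcLcp x.reverse y.reverse with hl
  have h2 : l ≤ x.length := by
    have := twcLcp_le_left x.reverse y.reverse
    simpa [← hl] using this
  have h3 : l ≤ y.length := by
    have := twcLcp_le_right x.reverse y.reverse
    simpa [← hl] using this
  have hx : (x.reverse.take l).reverse <:+ x :=
    ⟨(x.reverse.drop l).reverse, by
      rw [← List.reverse_append, List.take_append_drop, List.reverse_reverse]⟩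
  have hy : (y.reverse.take l).reverse <:+ y :=
    ⟨(y.reverse.drop l).reverse, by
      rw [← List.reverse_append, List.take_append_drop, List.reverse_reverse]⟩
  have hxy : (x.reverse.take l).reverse = (y.reverse.take l).reverse := by
    rw [hl]
    exact congrArg List.reverse (twcLcp_take _ _)
  have hy' : (x.reverse.take l).reverse <:+ y := hxy ▸ hy
  obtain ⟨w1, hw1⟩ := twc_walk_suffix f x _ hx
  obtain ⟨w2, hw2⟩ := twc_walk_suffix f y _ hy'
  have hd := SimpleGraph.dist_le (w1.append w2.reverse)
  have hslen : ((x.reverse.take l).reverse).length = l := by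
    simp only [List.length_reverse, List.length_take]
    omega
  rw [SimpleGraph.Walk.length_append, SimpleGraph.Walk.length_reverse, hw1, hw2, hslen] at hd
  refine hd.trans ?_
  simp only [twcRho, ← hl]
  omega

noncomputable instance (f : ℕ) : (infTree f).LocallyFinite := fun x =>
  Set.Finite.fintype <| Set.Finite.subset
    (((Set.finite_range fun a : Fin f => a :: x)).union (Set.finite_singleton x.tail))
    (by
      intro z hz
      rcases hz with ⟨a, rfl⟩ | ⟨a, ha⟩
      · exact Or.inl ⟨a, rfl⟩
      · right
        rw [ha, List.tail_cons]
        exact rfl)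

lemma twc_card (f : ℕ) (t : ℕ) (x y : List (Fin f)) :
    Nat.card {w : (infTree f).Walk x y // w.length = t}
      = ((infTree f).finsetWalkLength t x y).card := by
  rw [Nat.card_congr (Equiv.subtypeEquivRight
    (fun w => (SimpleGraph.mem_finsetWalkLength_iff (G := infTree f)).symm))]
  rw [Nat.card_eq_fintype_card, Fintype.card_coe]

lemma twc_card_succ (f : ℕ) (t : ℕ) (x y : List (Fin f)) :
    ((infTree f).finsetWalkLength (t + 1) x y).card
      ≤ ∑ z : (infTree f).neighborSet x, ((infTree f).finsetWalkLength t z y).card := by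
  have h : (infTree f).finsetWalkLength (t + 1) x y =
      Finset.univ.biUnion (fun (z : (infTree f).neighborSet x) =>
        ((infTree f).finsetWalkLength t z y).map
          ⟨fun p => SimpleGraph.Walk.cons z.property p, fun _ _ h => by cases h; rfl⟩) := rfl
  rw [h]
  refine Finset.card_biUnion_le.trans ?_
  simp [Finset.card_map]

/-! ### The key inductive bound -/

lemma twc_key (f : ℕ) (hf : 0 < f) (y : List (Fin f)) :
    ∀ (t : ℕ) (x : List (Fin f)),
      (Nat.card {w : (infTree f).Walk x y // w.length = t} : ℝ) ≤
        (2 * Real.exp 1 ^ 2 * (f : ℝ) ^ ((1 : ℝ) / 2)) ^ t *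
          ((Real.exp 1)⁻¹ * (f : ℝ) ^ (-(1 : ℝ) / 2)) ^ (twcRho f x y) := by
  classical
  have hfR : (1 : ℝ) ≤ (f : ℝ) := by exact_mod_cast hf
  set s : ℝ := (f : ℝ) ^ ((1 : ℝ) / 2) with hs
  have hs0 : 0 < s := Real.rpow_pos_of_pos (by linarith) _
  have hs2 : s * s = (f : ℝ) := by
    rw [hs, ← Real.rpow_add (by linarith)]
    norm_num
  have hs1 : 1 ≤ s := by nlinarith
  have he : (2 : ℝ) ≤ Real.exp 1 := le_of_lt (lt_trans (by norm_num) Real.exp_one_gt_d9)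
  have he0 : 0 < Real.exp 1 := Real.exp_pos 1
  set r : ℝ := (Real.exp 1)⁻¹ * (f : ℝ) ^ (-(1 : ℝ) / 2) with hrdef
  have hre : r = (Real.exp 1 * s)⁻¹ := by
    rw [hrdef, hs, neg_div, Real.rpow_neg (by linarith), mul_inv]
  have hr0 : 0 < r := by
    rw [hre]
    exact inv_pos.mpr (mul_pos he0 hs0)
  have hr1 : r ≤ 1 := by
    rw [hre]
    apply inv_le_one_of_one_le₀
    nlinarith
  set C : ℝ := 2 * Real.exp 1 ^ 2 * s with hC
  have hC0 : 0 < C := by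
    rw [hC]
    exact mul_pos (by positivity) hs0
  have hesr : Real.exp 1 * s * r = 1 := by
    rw [hre]
    exact mul_inv_cancel₀ (mul_pos he0 hs0).ne'
  have harith : ∀ ρ : ℕ, 2 * r ^ (ρ - 1) + (f : ℝ) * r ^ (ρ + 1) ≤ C * r ^ ρ := by
    intro ρ
    have hrρ : 0 < r ^ ρ := pow_pos hr0 ρ
    have h1 : r ^ (ρ - 1) ≤ Real.exp 1 * s * r ^ ρ := by
      cases ρ with
      | zero => simpa using (by nlinarith : (1 : ℝ) ≤ Real.exp 1 * s)
      | succ n =>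
          simp only [Nat.add_sub_cancel]
          refine le_of_eq ?_
          calc r ^ n = (Real.exp 1 * s * r) * r ^ n := by rw [hesr]; ring
            _ = Real.exp 1 * s * r ^ (n + 1) := by ring
    have h2 : (f : ℝ) * r ^ (ρ + 1) = (Real.exp 1)⁻¹ * s * r ^ ρ := by
      have : (f : ℝ) * r = (Real.exp 1)⁻¹ * s := by
        rw [hre, ← hs2]
        field_simp
      calc (f : ℝ) * r ^ (ρ + 1) = ((f : ℝ) * r) * r ^ ρ := by ring
        _ = (Real.exp 1)⁻¹ * s * r ^ ρ := by rw [this]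
    have hei : (Real.exp 1)⁻¹ ≤ 1 := by
      apply inv_le_one_of_one_le₀
      linarith
    have hei0 : 0 < (Real.exp 1)⁻¹ := by positivity
    calc 2 * r ^ (ρ - 1) + (f : ℝ) * r ^ (ρ + 1)
        ≤ 2 * (Real.exp 1 * s * r ^ ρ) + (Real.exp 1)⁻¹ * s * r ^ ρ := by
          rw [h2]
          have := mul_le_mul_of_nonneg_left h1 (by norm_num : (0:ℝ) ≤ 2)
          linarith
      _ ≤ C * r ^ ρ := by
          rw [hC]
          have hkey : 2 * Real.exp 1 + (Real.exp 1)⁻¹ ≤ 2 * Real.exp 1 ^ 2 := by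
            nlinarith
          calc 2 * (Real.exp 1 * s * r ^ ρ) + (Real.exp 1)⁻¹ * s * r ^ ρ
              = (2 * Real.exp 1 + (Real.exp 1)⁻¹) * (s * r ^ ρ) := by ring
            _ ≤ (2 * Real.exp 1 ^ 2) * (s * r ^ ρ) :=
                mul_le_mul_of_nonneg_right hkey (mul_pos hs0 hrρ).le
            _ = 2 * Real.exp 1 ^ 2 * s * (r ^ ρ) := by ring
  intro t
  induction t with
  | zero =>
      intro x
      by_cases hxy : x = y
      · subst hxy
        haveI : Unique {w : (infTree f).Walk x x // w.length = 0} :=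
          ⟨⟨⟨SimpleGraph.Walk.nil, rfl⟩⟩,
            fun w => Subtype.ext (SimpleGraph.Walk.nil_iff_eq_nil.mp (SimpleGraph.Walk.length_eq_zero_iff.mp w.2))⟩
        rw [Nat.card_unique, twcRho_self]
        simp
      · haveI : IsEmpty {w : (infTree f).Walk x y // w.length = 0} :=
          ⟨fun w => hxy (SimpleGraph.Walk.eq_of_length_eq_zero w.2)⟩
        rw [Nat.card_of_isEmpty, Nat.cast_zero]
        exact mul_nonneg (pow_nonneg hC0.le _) (pow_nonneg hr0.le _)
  | succ t ih =>
      intro x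
      rw [twc_card]
      have hstep : (((infTree f).finsetWalkLength (t + 1) x y).card : ℝ)
          ≤ ∑ z : (infTree f).neighborSet x,
              (((infTree f).finsetWalkLength t z y).card : ℝ) := by
        exact_mod_cast twc_card_succ f t x y
      refine hstep.trans ?_
      set ρ := twcRho f x y with hρ
      -- classify neighbors
      let E : (infTree f).neighborSet x → Option (Fin f) := fun z =>
        if h : ∃ a : Fin f, (z : List (Fin f)) = a :: x then some h.choose else none
      let H : Option (Fin f) → ℝ := fun o =>
        Option.rec (C ^ t * r ^ (twcRho f x.tail y))
          (fun a => C ^ t * r ^ (twcRho f (a :: x) y)) o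
      have hpt : ∀ z : (infTree f).neighborSet x,
          (((infTree f).finsetWalkLength t z y).card : ℝ) ≤ H (E z) := by
        intro z
        have hIH : (((infTree f).finsetWalkLength t z y).card : ℝ)
            ≤ C ^ t * r ^ (twcRho f z y) := by
          rw [← twc_card]
          exact ih z
        refine hIH.trans ?_
        by_cases h : ∃ a : Fin f, (z : List (Fin f)) = a :: x
        · have hspec := h.choose_spec
          simp only [E, dif_pos h, H]
          rw [← hspec]
        · have hz := z.property
          rcases hz with h1 | ⟨a, ha⟩
          · exact absurd h1 h
          · simp only [E, dif_neg h, H]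
            have hzt : (z : List (Fin f)) = x.tail := (congrArg List.tail ha).symm
            rw [← hzt]
      have hEinj : ∀ z1 ∈ (Finset.univ : Finset ((infTree f).neighborSet x)),
          ∀ z2 ∈ (Finset.univ : Finset ((infTree f).neighborSet x)),
            E z1 = E z2 → z1 = z2 := by
        intro z1 _ z2 _ hE
        by_cases h1 : ∃ a : Fin f, (z1 : List (Fin f)) = a :: x
        · by_cases h2 : ∃ a : Fin f, (z2 : List (Fin f)) = a :: x
          · simp only [E, dif_pos h1, dif_pos h2, Option.some.injEq] at hE
            apply Subtype.ext
            rw [h1.choose_spec, h2.choose_spec, hE]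
          · simp only [E, dif_pos h1, dif_neg h2] at hE
            exact absurd hE (by simp)
        · by_cases h2 : ∃ a : Fin f, (z2 : List (Fin f)) = a :: x
          · simp only [E, dif_neg h1, dif_pos h2] at hE
            exact absurd hE.symm (by simp)
          · have e1 : (z1 : List (Fin f)) = x.tail := by
              rcases z1.property with hh | ⟨a, ha⟩
              · exact absurd hh h1
              · exact (congrArg List.tail ha).symm
            have e2 : (z2 : List (Fin f)) = x.tail := by
              rcases z2.property with hh | ⟨a, ha⟩
              · exact absurd hh h2
              · exact (congrArg List.tail ha).symm
            apply Subtype.ext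
            rw [e1, e2]
      have hHnn : ∀ o, 0 ≤ H o := by
        intro o
        cases o <;>
          exact mul_nonneg (pow_nonneg hC0.le t) (pow_nonneg hr0.le _)
      obtain ⟨b, hb⟩ := twcRho_cons_exceptional f hf x y
      have hpow : ∀ m n : ℕ, m ≤ n → r ^ n ≤ r ^ m :=
        fun m n hmn => pow_le_pow_of_le_one hr0.le hr1 hmn
      have p1 : H none ≤ C ^ t * r ^ (ρ - 1) :=
        mul_le_mul_of_nonneg_left (hpow _ _ (twcRho_tail_ge f x y)) (pow_nonneg hC0.le t)
      have p2 : H (some b) ≤ C ^ t * r ^ (ρ - 1) :=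
        mul_le_mul_of_nonneg_left (hpow _ _ (twcRho_cons_ge f b x y)) (pow_nonneg hC0.le t)
      have p3 : ∑ a ∈ Finset.univ.erase b, H (some a)
          ≤ (f : ℝ) * (C ^ t * r ^ (ρ + 1)) := by
        refine (Finset.sum_le_card_nsmul _ _ (C ^ t * r ^ (ρ + 1)) ?_).trans ?_
        · intro a haa
          exact mul_le_mul_of_nonneg_left
            (hpow _ _ (hb a (Finset.mem_erase.mp haa).1)) (pow_nonneg hC0.le t)
        · rw [nsmul_eq_mul]
          apply mul_le_mul_of_nonneg_right _
            (mul_nonneg (pow_nonneg hC0.le t) (pow_nonneg hr0.le _))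
          calc ((Finset.univ.erase b).card : ℝ) ≤ ((Finset.univ : Finset (Fin f)).card : ℝ) := by
                exact_mod_cast Finset.card_le_card (Finset.erase_subset _ _)
            _ = (f : ℝ) := by simp
      calc ∑ z : (infTree f).neighborSet x, (((infTree f).finsetWalkLength t z y).card : ℝ)
          ≤ ∑ z : (infTree f).neighborSet x, H (E z) :=
            Finset.sum_le_sum fun z _ => hpt z
        _ = ∑ o ∈ Finset.univ.image E, H o := (Finset.sum_image hEinj).symm
        _ ≤ ∑ o : Option (Fin f), H o :=
            Finset.sum_le_sum_of_subset_of_nonneg (Finset.subset_univ _)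
              (fun o _ _ => hHnn o)
        _ = H none + ∑ a : Fin f, H (some a) := Fintype.sum_option H
        _ = H none + (H (some b) + ∑ a ∈ Finset.univ.erase b, H (some a)) := by
            exact congrArg (fun w => H none + w)
              (Finset.add_sum_erase Finset.univ (fun a => H (some a))
                (Finset.mem_univ b)).symm
        _ ≤ C ^ t * r ^ (ρ - 1) + (C ^ t * r ^ (ρ - 1) + (f : ℝ) * (C ^ t * r ^ (ρ + 1))) := by
            have := add_le_add p2 p3
            linarith
        _ = C ^ t * (2 * r ^ (ρ - 1) + (f : ℝ) * r ^ (ρ + 1)) := by ring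
        _ ≤ C ^ t * (C * r ^ ρ) :=
            mul_le_mul_of_nonneg_left (harith ρ) (pow_nonneg hC0.le t)
        _ = C ^ (t + 1) * r ^ ρ := by ring

/-- In the infinite `f`-ary tree, for any vertices `x, y`, any `t : ℕ`,
and any `κ ≤ dist(x,y)`, the number of walks of length `t` from `x` to `y` is at most
`(2e²·f^(1/2))^t · (e^(−1)·f^(−1/2))^κ`. -/
theorem tree_walk_count_bound (f : ℕ) (hf : 0 < f) (x y : List (Fin f)) (t κ : ℕ)
    (hκ : κ ≤ (infTree f).dist x y) :
    (Nat.card {w : (infTree f).Walk x y // w.length = t} : ℝ) ≤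
      (2 * Real.exp 1 ^ 2 * (f : ℝ) ^ ((1 : ℝ) / 2)) ^ t *
        ((Real.exp 1)⁻¹ * (f : ℝ) ^ (-(1 : ℝ) / 2)) ^ κ := by
  have hfR : (1 : ℝ) ≤ (f : ℝ) := by exact_mod_cast hf
  have he0 : 0 < Real.exp 1 := Real.exp_pos 1
  have hr0 : 0 < (Real.exp 1)⁻¹ * (f : ℝ) ^ (-(1 : ℝ) / 2) := by positivity
  have hr1 : (Real.exp 1)⁻¹ * (f : ℝ) ^ (-(1 : ℝ) / 2) ≤ 1 := by
    have h1 : (f : ℝ) ^ (-(1 : ℝ) / 2) ≤ 1 := by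
      apply Real.rpow_le_one_of_one_le_of_nonpos hfR
      norm_num
    have h2 : (Real.exp 1)⁻¹ ≤ 1 := by
      apply inv_le_one_of_one_le₀
      linarith [Real.exp_one_gt_d9]
    calc (Real.exp 1)⁻¹ * (f : ℝ) ^ (-(1 : ℝ) / 2) ≤ 1 * 1 :=
          mul_le_mul h2 h1 (by positivity) (by norm_num)
      _ = 1 := by norm_num
  refine (twc_key f hf y t x).trans ?_
  apply mul_le_mul_of_nonneg_left _ (by positivity)
  exact pow_le_pow_of_le_one hr0.le hr1 (hκ.trans (twc_dist_le_rho f x y))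
end
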